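/- Convergence of the Taylor series of the CSI ratio (Proposition 1): assume |c_l| = 1 for every l ∈ Fin L, let z⁰ ∈ ℂ^L with D(z⁰) ≠ 0, and let R ≥ 0 satisfy L·R < |D(z⁰)|. Then for every increment vector w ∈ ℂ^L with |w_l| ≤ R for all l, the multivariate Taylor series of f at z⁰ evaluated at w converges absolutely; precisely, the family of terms (1/k!) · ∂^k f / ∂z_{l₁}⋯∂z_{l_k}(z⁰) · ∏_{i=1}^{k} w_{l_i}, indexed by k ∈ ℕ and tuples (l₁,…,l_k) ∈ (Fin L)^k, is absolutely summable, with Σ_{k≥0} Σ_{tuples} |term| ≤ ((|N(z⁰)| + |D(z⁰)|)/|D(z⁰)|) · 1/(1 − L·R/|D(z⁰)|). (In the channel model, R = 2·max_l |α_l| and the hypothesis is the paper's condition |y_{n−q}| > 2L·max_l |α_l|.) -/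

import Mathlib

open scoped BigOperators

/-- Numerator `N(z) = A + Σ_l z_l` of the CSI ratio. -/
noncomputable def Nfun (L : ℕ) (A : ℂ) (z : Fin L → ℂ) : ℂ := A + ∑ l, z l

/-- Denominator `D(z) = B + Σ_l c_l z_l` of the CSI ratio. -/
noncomputable def Dfun (L : ℕ) (B : ℂ) (c : Fin L → ℂ) (z : Fin L → ℂ) : ℂ :=
  B + ∑ l, c l * z l

/-- The CSI ratio `f(z) = N(z)/D(z)`. -/
noncomputable def ffun (L : ℕ) (A B : ℂ) (c : Fin L → ℂ) (z : Fin L → ℂ) : ℂ :=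
  Nfun L A z / Dfun L B c z

/-- The Taylor term of order `k` for the tuple `l : Fin k → Fin L`, evaluated at
increments `w`: `(1/k!) ∂^k f/∂z_{l₁}⋯∂z_{l_k}(z⁰) ∏_i w_{l_i}`. -/
noncomputable def taylorTerm (L : ℕ) (A B : ℂ) (c : Fin L → ℂ)
    (z₀ w : Fin L → ℂ) (p : Σ k : ℕ, Fin k → Fin L) : ℂ :=
  (p.1.factorial : ℂ)⁻¹ *
    iteratedFDeriv ℂ p.1 (ffun L A B c) z₀ (fun i => Pi.single (p.2 i) 1) *
    ∏ i, w (p.2 i)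

namespace CSIAux

variable (L : ℕ) (A B : ℂ) (c : Fin L → ℂ)

noncomputable def Scl : (Fin L → ℂ) →L[ℂ] ℂ := ∑ l, ContinuousLinearMap.proj l

noncomputable def Tcl : (Fin L → ℂ) →L[ℂ] ℂ := ∑ l, c l • ContinuousLinearMap.proj l

lemma Scl_apply (z : Fin L → ℂ) : Scl L z = ∑ l, z l := by
  simp [Scl]

lemma Tcl_apply (z : Fin L → ℂ) : Tcl L c z = ∑ l, c l * z l := by
  simp [Tcl, smul_eq_mul]

lemma Scl_single (l : Fin L) : Scl L (Pi.single l 1) = 1 := by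
  simp [Scl_apply, Pi.single_apply, Finset.sum_ite_eq']

lemma Tcl_single (l : Fin L) : Tcl L c (Pi.single l 1) = c l := by
  simp [Tcl_apply, Pi.single_apply, mul_ite, Finset.sum_ite_eq']

lemma hasFDerivAt_D (x : Fin L → ℂ) : HasFDerivAt (Dfun L B c) (Tcl L c) x := by
  have h := ((Tcl L c).hasFDerivAt (x := x)).const_add B
  have he : (fun z => B + Tcl L c z) = Dfun L B c := by
    funext z; simp [Dfun, Tcl_apply]
  rwa [he] at h

lemma hasFDerivAt_N (x : Fin L → ℂ) : HasFDerivAt (Nfun L A) (Scl L) x := by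
  have h := ((Scl L).hasFDerivAt (x := x)).const_add A
  have he : (fun z => A + Scl L z) = Nfun L A := by
    funext z; simp [Nfun, Scl_apply]
  rwa [he] at h

lemma continuous_D : Continuous (Dfun L B c) := by
  have h : Continuous fun z => B + Tcl L c z := continuous_const.add (Tcl L c).continuous
  have he : (fun z => B + Tcl L c z) = Dfun L B c := by
    funext z; simp [Dfun, Tcl_apply]
  rwa [he] at h

noncomputable def Qm (k : ℕ) : ContinuousMultilinearMap ℂ (fun _ : Fin k => (Fin L → ℂ)) ℂ :=
  (ContinuousMultilinearMap.mkPiAlgebra ℂ (Fin k) ℂ).compContinuousLinearMap fun _ => Tcl L c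

noncomputable def Pm (k : ℕ) : ContinuousMultilinearMap ℂ (fun _ : Fin k => (Fin L → ℂ)) ℂ :=
  ∑ i : Fin k, (ContinuousMultilinearMap.mkPiAlgebra ℂ (Fin k) ℂ).compContinuousLinearMap
    (Function.update (fun _ => Tcl L c) i (Scl L))

lemma Qm_apply (k : ℕ) (m : Fin k → Fin L → ℂ) :
    Qm L c k m = ∏ i, Tcl L c (m i) := by
  simp [Qm]

lemma Pm_apply (k : ℕ) (m : Fin k → Fin L → ℂ) :
    Pm L c k m = ∑ i, ∏ j, (Function.update (fun _ => Tcl L c) i (Scl L) j) (m j) := by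
  simp [Pm]

lemma Qm_succ (k : ℕ) (m : Fin (k + 1) → Fin L → ℂ) :
    Qm L c (k + 1) m = Tcl L c (m 0) * Qm L c k (Fin.tail m) := by
  simp [Qm_apply, Fin.prod_univ_succ, Fin.tail]

lemma upd0 (k : ℕ) (j : Fin k) :
    Function.update (fun _ : Fin (k + 1) => Tcl L c) 0 (Scl L) j.succ = Tcl L c :=
  Function.update_of_ne (Fin.succ_ne_zero j) _ _

lemma updsz (k : ℕ) (i : Fin k) :
    Function.update (fun _ : Fin (k + 1) => Tcl L c) i.succ (Scl L) 0 = Tcl L c :=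
  Function.update_of_ne (Fin.succ_ne_zero i).symm _ _

lemma updss (k : ℕ) (i j : Fin k) :
    Function.update (fun _ : Fin (k + 1) => Tcl L c) i.succ (Scl L) j.succ
      = Function.update (fun _ : Fin k => Tcl L c) i (Scl L) j := by
  rcases eq_or_ne j i with rfl | h
  · simp
  · rw [Function.update_of_ne (fun hh => h (Fin.succ_injective _ hh)) _ _,
      Function.update_of_ne h _ _]

lemma Pm_succ (k : ℕ) (m : Fin (k + 1) → Fin L → ℂ) :
    Pm L c (k + 1) m = Scl L (m 0) * Qm L c k (Fin.tail m)
      + Tcl L c (m 0) * Pm L c k (Fin.tail m) := by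
  rw [Pm_apply, Fin.sum_univ_succ]
  congr 1
  · rw [Fin.prod_univ_succ, Qm_apply, Function.update_self]
    congr 1
    all_goals exact Finset.prod_congr rfl fun j _ => by first | (rw [upd0]; rfl) | rw [upd0]
  · rw [Pm_apply, Finset.mul_sum]
    refine Finset.sum_congr rfl fun i _ => ?_
    rw [Fin.prod_univ_succ, updsz]
    congr 1
    all_goals exact Finset.prod_congr rfl fun j _ => by first | (rw [updss]; rfl) | rw [updss]

/-- The key explicit formula for the iterated derivatives of `ffun`. -/
theorem key (k : ℕ) : ∀ x, Dfun L B c x ≠ 0 →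
    iteratedFDeriv ℂ (k + 1) (ffun L A B c) x =
      ((-1 : ℂ) ^ k * k.factorial * ((Dfun L B c x) ^ (k + 1))⁻¹) • Pm L c (k + 1)
      + ((-1 : ℂ) ^ (k + 1) * (k + 1).factorial * Nfun L A x *
          ((Dfun L B c x) ^ (k + 2))⁻¹) • Qm L c (k + 1) := by
  induction k with
  | zero =>
    intro x hx
    ext m
    rw [iteratedFDeriv_one_apply]
    have hinvD : HasFDerivAt (fun y => (Dfun L B c y)⁻¹)
        (-((Dfun L B c x ^ 2)⁻¹ • Tcl L c)) x := by
      have h1 : HasDerivAt (fun w : ℂ => w⁻¹) (-(Dfun L B c x ^ 2)⁻¹) (Dfun L B c x) :=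
        hasDerivAt_inv hx
      have := h1.comp_hasFDerivAt x (hasFDerivAt_D L B c x)
      simp [Function.comp_def] at this; refine this.congr_fderiv ?_; ext v; simp
    have hf := (hasFDerivAt_N L A x).mul hinvD
    have he : (fun y => Nfun L A y * (Dfun L B c y)⁻¹) = ffun L A B c := by
      funext y; rw [ffun, div_eq_mul_inv]
    rw [show (Nfun L A * fun y => (Dfun L B c y)⁻¹) = ffun L A B c from he] at hf
    rw [hf.fderiv]
    simp only [ContinuousMultilinearMap.add_apply, ContinuousMultilinearMap.smul_apply,
      ContinuousLinearMap.add_apply, ContinuousLinearMap.smul_apply, smul_eq_mul,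
      ContinuousLinearMap.neg_apply, Pm_apply, Qm_apply, Fin.sum_univ_succ, Fin.prod_univ_succ, Fin.sum_univ_zero,
      Fin.prod_univ_zero, Function.update_self, Nat.factorial]
    field_simp
    ring
  | succ k ih =>
    intro x hx
    have hU : IsOpen {y : Fin L → ℂ | Dfun L B c y ≠ 0} :=
      isOpen_compl_singleton.preimage (continuous_D L B c)
    have hev : iteratedFDeriv ℂ (k + 1) (ffun L A B c) =ᶠ[nhds x]
        fun y => ((-1 : ℂ) ^ k * k.factorial * ((Dfun L B c y) ^ (k + 1))⁻¹) • Pm L c (k + 1)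
          + ((-1 : ℂ) ^ (k + 1) * (k + 1).factorial * Nfun L A y *
              ((Dfun L B c y) ^ (k + 2))⁻¹) • Qm L c (k + 1) :=
      Filter.eventuallyEq_of_mem (hU.mem_nhds hx) fun y hy => ih y hy
    -- derivative of the inverse powers
    have hinv1 : HasFDerivAt (fun y => ((Dfun L B c y) ^ (k + 1))⁻¹)
        ((-(((k : ℂ) + 1) * Dfun L B c x ^ k) / (Dfun L B c x ^ (k + 1)) ^ 2) • Tcl L c) x := by
      have h1 : HasDerivAt (fun w : ℂ => (w ^ (k + 1))⁻¹)
          (-(((k : ℂ) + 1) * Dfun L B c x ^ k) / (Dfun L B c x ^ (k + 1)) ^ 2)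
          (Dfun L B c x) := by
        have := (hasDerivAt_pow (k + 1) (Dfun L B c x)).inv (pow_ne_zero _ hx)
        simp at this; exact this
      have := h1.comp_hasFDerivAt x (hasFDerivAt_D L B c x)
      simpa [Function.comp_def] using this
    have hinv2 : HasFDerivAt (fun y => ((Dfun L B c y) ^ (k + 2))⁻¹)
        ((-(((k : ℂ) + 2) * Dfun L B c x ^ (k + 1)) / (Dfun L B c x ^ (k + 2)) ^ 2) • Tcl L c)
        x := by
      have h1 : HasDerivAt (fun w : ℂ => (w ^ (k + 2))⁻¹)
          (-(((k : ℂ) + 2) * Dfun L B c x ^ (k + 1)) / (Dfun L B c x ^ (k + 2)) ^ 2)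
          (Dfun L B c x) := by
        have := (hasDerivAt_pow (k + 2) (Dfun L B c x)).inv (pow_ne_zero _ hx)
        simp [Nat.cast_ofNat] at this; exact this
      have := h1.comp_hasFDerivAt x (hasFDerivAt_D L B c x)
      simpa [Function.comp_def] using this
    have ha : HasFDerivAt
        (fun y => (-1 : ℂ) ^ k * k.factorial * ((Dfun L B c y) ^ (k + 1))⁻¹)
        (((-1 : ℂ) ^ k * k.factorial) •
          ((-(((k : ℂ) + 1) * Dfun L B c x ^ k) / (Dfun L B c x ^ (k + 1)) ^ 2) • Tcl L c)) x :=
      hinv1.const_mul _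
    have hb : HasFDerivAt
        (fun y => (-1 : ℂ) ^ (k + 1) * (k + 1).factorial * Nfun L A y *
          ((Dfun L B c y) ^ (k + 2))⁻¹)
        (((-1 : ℂ) ^ (k + 1) * (k + 1).factorial * Nfun L A x) •
          ((-(((k : ℂ) + 2) * Dfun L B c x ^ (k + 1)) / (Dfun L B c x ^ (k + 2)) ^ 2) • Tcl L c)
          + ((Dfun L B c x) ^ (k + 2))⁻¹ •
            (((-1 : ℂ) ^ (k + 1) * (k + 1).factorial) • Scl L)) x :=
      ((hasFDerivAt_N L A x).const_mul _).mul hinv2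
    have hΦ := (ha.smul_const (Pm L c (k + 1))).add (hb.smul_const (Qm L c (k + 1)))
    ext m
    rw [iteratedFDeriv_succ_apply_left, hev.fderiv_eq]
    erw [hΦ.fderiv]
    simp only [ContinuousLinearMap.add_apply, ContinuousLinearMap.smulRight_apply,
      ContinuousLinearMap.smul_apply, ContinuousMultilinearMap.add_apply,
      ContinuousMultilinearMap.smul_apply, smul_eq_mul,
      Pm_succ, Qm_succ]
    set d := Dfun L B c x with hd
    set n := Nfun L A x
    set t0 := Tcl L c (m 0)
    set s0 := Scl L (m 0)
    set P := Pm L c (k + 1) (Fin.tail m)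
    set Q := Qm L c (k + 1) (Fin.tail m)
    have hfac : ((k + 2).factorial : ℂ) = ((k : ℂ) + 2) * ((k + 1).factorial : ℂ) := by
      push_cast [Nat.factorial_succ]; ring
    have hfac1 : ((k + 1).factorial : ℂ) = ((k : ℂ) + 1) * (k.factorial : ℂ) := by
      push_cast [Nat.factorial_succ]; ring
    rw [hfac, hfac1]
    field_simp
    ring

lemma Qm_single_norm (hc : ∀ l, ‖c l‖ = 1) (k : ℕ) (e : Fin k → Fin L) :
    ‖Qm L c k (fun i => Pi.single (e i) 1)‖ = 1 := by
  rw [Qm_apply, norm_prod]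
  have h : ∀ i ∈ (Finset.univ : Finset (Fin k)),
      ‖Tcl L c (Pi.single (e i) (1 : ℂ))‖ = 1 := fun i _ => by
    rw [Tcl_single]; exact hc _
  rw [Finset.prod_congr rfl h, Finset.prod_const_one]

lemma Pm_single_norm (hc : ∀ l, ‖c l‖ = 1) (k : ℕ) (e : Fin k → Fin L) :
    ‖Pm L c k (fun i => Pi.single (e i) 1)‖ ≤ (k : ℝ) := by
  rw [Pm_apply]
  refine (norm_sum_le _ _).trans ?_
  have h : ∀ i ∈ (Finset.univ : Finset (Fin k)),
      ‖∏ j, (Function.update (fun _ => Tcl L c) i (Scl L) j) (Pi.single (e j) (1 : ℂ))‖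
        = 1 := by
    intro i _
    rw [norm_prod]
    have h2 : ∀ j ∈ (Finset.univ : Finset (Fin k)),
        ‖(Function.update (fun _ => Tcl L c) i (Scl L) j) (Pi.single (e j) (1 : ℂ))‖ = 1 := by
      intro j _
      rcases eq_or_ne j i with rfl | hne
      · rw [Function.update_self, Scl_single, norm_one]
      · rw [Function.update_of_ne hne, Tcl_single]; exact hc _
    rw [Finset.prod_congr rfl h2, Finset.prod_const_one]
  rw [Finset.sum_congr rfl h, Finset.sum_const, Finset.card_univ, Fintype.card_fin,
    nsmul_eq_mul, mul_one]

end CSIAux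

/-- Convergence of the Taylor series of the CSI ratio (Proposition 1): if
`|c_l| = 1` for all `l`, `D(z⁰) ≠ 0`, `R ≥ 0` with `L·R < |D(z⁰)|`, and
`|w_l| ≤ R` for all `l`, then the family of Taylor terms, indexed by `k ∈ ℕ`
and tuples `(l₁,…,l_k) ∈ (Fin L)^k`, is absolutely summable and
`Σ_{k≥0} Σ_{tuples} |term| ≤ ((|N(z⁰)|+|D(z⁰)|)/|D(z⁰)|) · 1/(1 − L·R/|D(z⁰)|)`. -/
theorem csi_ratio_taylor_series_convergence
    (L : ℕ) (hL : 1 ≤ L) (A B : ℂ) (c : Fin L → ℂ)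
    (hc : ∀ l, ‖c l‖ = 1)
    (z₀ : Fin L → ℂ) (hD : Dfun L B c z₀ ≠ 0)
    (R : ℝ) (hR : 0 ≤ R) (hLR : (L : ℝ) * R < ‖Dfun L B c z₀‖)
    (w : Fin L → ℂ) (hw : ∀ l, ‖w l‖ ≤ R) :
    Summable (fun p : Σ k : ℕ, Fin k → Fin L => ‖taylorTerm L A B c z₀ w p‖) ∧
    ∑' p : Σ k : ℕ, Fin k → Fin L, ‖taylorTerm L A B c z₀ w p‖ ≤
      ((‖Nfun L A z₀‖ + ‖Dfun L B c z₀‖) / ‖Dfun L B c z₀‖) *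
        (1 / (1 - (L : ℝ) * R / ‖Dfun L B c z₀‖)) := by
  classical
  set d : ℝ := ‖Dfun L B c z₀‖ with hdd
  have hd0 : 0 < d := norm_pos_iff.mpr hD
  set nn : ℝ := ‖Nfun L A z₀‖ with hnn
  have hnn0 : 0 ≤ nn := norm_nonneg _
  set C : ℝ := (nn + d) / d with hC
  have hC0 : 0 ≤ C := div_nonneg (by positivity) hd0.le
  set r : ℝ := R / d with hr
  have hr0 : 0 ≤ r := div_nonneg hR hd0.le
  have hLr : (L : ℝ) * r < 1 := by
    rw [hr, ← mul_div_assoc]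
    exact (div_lt_one hd0).mpr hLR
  have hLr0 : 0 ≤ (L : ℝ) * r := mul_nonneg (Nat.cast_nonneg _) hr0
  -- pointwise bound on the taylor terms
  have bound : ∀ p : Σ k : ℕ, Fin k → Fin L, ‖taylorTerm L A B c z₀ w p‖ ≤ C * r ^ p.1 := by
    rintro ⟨k, e⟩
    have hprod : ‖∏ i : Fin k, w (e i)‖ ≤ R ^ k := by
      rw [norm_prod]
      calc ∏ i : Fin k, ‖w (e i)‖ ≤ ∏ _i : Fin k, R :=
            Finset.prod_le_prod (fun _ _ => norm_nonneg _) (fun i _ => hw _)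
        _ = R ^ k := by
            rw [Finset.prod_const, Finset.card_univ, Fintype.card_fin]
    rcases k with _ | k
    · -- order 0
      rw [taylorTerm]
      simp only [Nat.factorial_zero, Nat.cast_one, inv_one, one_mul, pow_zero, mul_one,
        Fin.prod_univ_zero, iteratedFDeriv_zero_apply]
      rw [ffun, norm_div, ← hdd, ← hnn, hC]
      exact (div_le_div_iff_of_pos_right hd0).mpr (by linarith)
    · -- order k+1
      have hiter : ‖(iteratedFDeriv ℂ (k + 1) (ffun L A B c) z₀)
            (fun i => Pi.single (e i) 1)‖
          ≤ ((k + 1).factorial : ℝ) * ((nn + d) / d ^ (k + 2)) := by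
        rw [CSIAux.key L A B c k z₀ hD]
        rw [ContinuousMultilinearMap.add_apply, ContinuousMultilinearMap.smul_apply,
          ContinuousMultilinearMap.smul_apply, smul_eq_mul, smul_eq_mul]
        refine (norm_add_le _ _).trans ?_
        have hP := CSIAux.Pm_single_norm L c hc (k + 1) e
        have hQ := CSIAux.Qm_single_norm L c hc (k + 1) e
        have hsa : ‖(-1 : ℂ) ^ k * (k.factorial : ℂ) * ((Dfun L B c z₀ ^ (k + 1))⁻¹)‖
            = (k.factorial : ℝ) / d ^ (k + 1) := by
          rw [norm_mul, norm_mul, norm_pow, norm_neg, norm_one, one_pow, one_mul,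
            norm_inv, norm_pow, ← hdd, Complex.norm_natCast, div_eq_mul_inv]
        have hsb : ‖(-1 : ℂ) ^ (k + 1) * ((k + 1).factorial : ℂ) * Nfun L A z₀ *
              ((Dfun L B c z₀ ^ (k + 2))⁻¹)‖
            = ((k + 1).factorial : ℝ) * nn / d ^ (k + 2) := by
          rw [norm_mul, norm_mul, norm_mul, norm_pow, norm_neg, norm_one, one_pow, one_mul,
            norm_inv, norm_pow, ← hdd, ← hnn, Complex.norm_natCast]
          rw [mul_div_assoc, div_eq_mul_inv, mul_assoc]
        have hterm1 : ‖(-1 : ℂ) ^ k * (k.factorial : ℂ) * ((Dfun L B c z₀ ^ (k + 1))⁻¹) *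
              CSIAux.Pm L c (k + 1) (fun i => Pi.single (e i) 1)‖
            ≤ ((k.factorial : ℝ) / d ^ (k + 1)) * ((k : ℝ) + 1) := by
          rw [norm_mul, hsa]
          refine mul_le_mul le_rfl ?_ (norm_nonneg _) (by positivity)
          exact_mod_cast hP
        have hterm2 : ‖(-1 : ℂ) ^ (k + 1) * ((k + 1).factorial : ℂ) * Nfun L A z₀ *
              ((Dfun L B c z₀ ^ (k + 2))⁻¹) *
              CSIAux.Qm L c (k + 1) (fun i => Pi.single (e i) 1)‖
            = ((k + 1).factorial : ℝ) * nn / d ^ (k + 2) := by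
          rw [norm_mul, hsb, hQ, mul_one]
        refine (add_le_add hterm1 hterm2.le).trans ?_
        apply le_of_eq
        have hfac : (((k + 1).factorial : ℝ)) = ((k : ℝ) + 1) * (k.factorial : ℝ) := by
          push_cast [Nat.factorial_succ]; ring
        rw [hfac, div_mul_eq_mul_div, ← mul_div_assoc,
          div_add_div _ _ (by positivity : (d : ℝ) ^ (k + 1) ≠ 0)
            (by positivity : (d : ℝ) ^ (k + 2) ≠ 0),
          div_eq_div_iff (by positivity) (by positivity)]
        ring
      rw [taylorTerm, norm_mul, norm_mul]
      have h0 : ‖(((k + 1).factorial : ℕ) : ℂ)⁻¹‖ = (((k + 1).factorial : ℕ) : ℝ)⁻¹ := by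
        rw [norm_inv, Complex.norm_natCast]
      rw [h0]
      have hfp : (0 : ℝ) < (((k + 1).factorial : ℕ) : ℝ) := by positivity
      calc ((((k + 1).factorial : ℕ) : ℝ))⁻¹ *
            ‖(iteratedFDeriv ℂ (k + 1) (ffun L A B c) z₀) (fun i => Pi.single (e i) 1)‖ *
            ‖∏ i, w (e i)‖
          ≤ (((k + 1).factorial : ℕ) : ℝ)⁻¹ *
              (((k + 1).factorial : ℝ) * ((nn + d) / d ^ (k + 2))) * R ^ (k + 1) := by
            refine mul_le_mul (mul_le_mul le_rfl hiter (norm_nonneg _) (by positivity))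
              hprod (norm_nonneg _) (by positivity)
        _ = C * r ^ (k + 1) := by
            rw [inv_mul_cancel_left₀ hfp.ne', hC, hr, div_pow, div_mul_div_comm,
              div_mul_eq_mul_div, ← pow_succ']
  -- the geometric majorant
  set g : (Σ k : ℕ, Fin k → Fin L) → ℝ := fun p => C * r ^ p.1 with hg
  have hgnn : ∀ p, 0 ≤ g p := fun p => mul_nonneg hC0 (pow_nonneg hr0 _)
  have hfib : ∀ k : ℕ, Summable (fun l : Fin k → Fin L => g ⟨k, l⟩) := fun k => by
    exact Summable.of_finite
  have hfibsum : (fun k : ℕ => ∑' _l : Fin k → Fin L, g ⟨k, _l⟩)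
      = fun k : ℕ => C * ((L : ℝ) * r) ^ k := by
    funext k
    simp only [hg]
    rw [tsum_const]
    simp only [Nat.card_eq_fintype_card, Fintype.card_fun, Fintype.card_fin, nsmul_eq_mul,
      mul_pow]
    push_cast
    ring
  have hgeo : Summable (fun k : ℕ => C * ((L : ℝ) * r) ^ k) :=
    (summable_geometric_of_lt_one hLr0 hLr).mul_left C
  have hgsum : Summable g := by
    refine (summable_sigma_of_nonneg hgnn).2 ⟨hfib, ?_⟩
    rw [hfibsum]; exact hgeo
  have hsum : Summable (fun p : Σ k : ℕ, Fin k → Fin L => ‖taylorTerm L A B c z₀ w p‖) :=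
    hgsum.of_nonneg_of_le (fun _ => norm_nonneg _) bound
  refine ⟨hsum, ?_⟩
  calc ∑' p : Σ k : ℕ, Fin k → Fin L, ‖taylorTerm L A B c z₀ w p‖
      ≤ ∑' p, g p := Summable.tsum_le_tsum bound hsum hgsum
    _ = ∑' k : ℕ, ∑' l : Fin k → Fin L, g ⟨k, l⟩ := Summable.tsum_sigma' hfib hgsum
    _ = ∑' k : ℕ, C * ((L : ℝ) * r) ^ k := by rw [hfibsum]
    _ = C * (1 - (L : ℝ) * r)⁻¹ := by
        rw [tsum_mul_left, tsum_geometric_of_lt_one hLr0 hLr]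
    _ = C * (1 / (1 - (L : ℝ) * R / d)) := by
        rw [one_div, hr, ← mul_div_assoc]
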